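/- For every integer k ≥ 1 there exist k distinct points p₁, …, p_k ∈ ℝ² such that the set {p₁, …, p_k} is shattered by the family of Hausdorff metric balls centered at k-point sets: for every subset A ⊆ {1, …, k} there exist a tuple q : Fin k → ℝ² and a radius r > 0 such that for every i ∈ {1, …, k}, the Hausdorff distance between the singleton {p_i} and the finite set {q₁, …, q_k} is at most r if and only if i ∈ A. Consequently, the VC dimension of the range space on ℝ² whose ranges are Hausdorff metric balls centered at k-point sets is at least k. -/

import Mathlib

open Metric Set

noncomputable def pt (t : ℝ) : EuclideanSpace ℝ (Fin 2) :=
  !₂[2 * t / (1 + t ^ 2), (1 - t ^ 2) / (1 + t ^ 2)]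

lemma one_add_sq_pos (t : ℝ) : 0 < 1 + t ^ 2 := by positivity

lemma norm_pt (t : ℝ) : ‖pt t‖ = 1 := by
  have h : (0:ℝ) < 1 + t ^ 2 := one_add_sq_pos t
  rw [EuclideanSpace.norm_eq]
  have : ∑ i : Fin 2, ‖pt t i‖ ^ 2 = 1 := by
    simp [Fin.sum_univ_two, pt]
    rw [div_pow, div_pow, ← add_div, div_eq_one_iff_eq (by positivity)]
    ring
  rw [this, Real.sqrt_one]

lemma pt_inj : Function.Injective pt := by
  intro s t h
  have h0 := congrArg (fun v => v 0) h
  have h1 := congrArg (fun v => v 1) h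
  simp [pt] at h0 h1
  have hs : (0:ℝ) < 1 + s ^ 2 := one_add_sq_pos s
  have ht : (0:ℝ) < 1 + t ^ 2 := one_add_sq_pos t
  have e1 : (1 - s ^ 2) * (1 + t ^ 2) = (1 - t ^ 2) * (1 + s ^ 2) := by
    field_simp at h1; linarith
  have hsq : s ^ 2 = t ^ 2 := by nlinarith
  have e0 : 2 * s * (1 + t ^ 2) = 2 * t * (1 + s ^ 2) := by
    field_simp at h0; linarith
  nlinarith [sq_nonneg (s - t), sq_nonneg (s + t)]

lemma norm_add_lt_two {x y : EuclideanSpace ℝ (Fin 2)} (hx : ‖x‖ = 1) (hy : ‖y‖ = 1)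
    (hne : x ≠ y) : ‖x + y‖ < 2 := by
  have h := norm_add_le x y
  rw [hx, hy] at h
  rcases h.lt_or_eq with h | h
  · linarith
  · exact absurd (eq_of_norm_eq_of_norm_add_eq (hx.trans hy.symm) (by rw [hx, hy]; linarith)) hne

theorem vc_hausdorff_lower_k (k : ℕ) (hk : 1 ≤ k) :
    ∃ p : Fin k → EuclideanSpace ℝ (Fin 2), Function.Injective p ∧
      ∀ A : Finset (Fin k),
        ∃ (q : Fin k → EuclideanSpace ℝ (Fin 2)) (r : ℝ), 0 < r ∧
          ∀ i : Fin k,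
            (Metric.hausdorffDist ({p i} : Set (EuclideanSpace ℝ (Fin 2)))
                (Set.range q) ≤ r ↔ i ∈ A) := by
  have : NeZero k := ⟨by omega⟩
  set p : Fin k → EuclideanSpace ℝ (Fin 2) := fun i => pt (i : ℕ) with hp
  have hpinj : Function.Injective p := by
    intro i j h
    have := pt_inj h
    exact_mod_cast Fin.val_injective (by exact_mod_cast this)
  have hpnorm : ∀ i, ‖p i‖ = 1 := fun i => norm_pt _
  refine ⟨p, hpinj, fun A => ?_⟩
  set q : Fin k → EuclideanSpace ℝ (Fin 2) := fun j => if j ∈ A then 0 else -(p j) with hq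
  have hS : (1:ℝ) ∈ insert (1:ℝ)
      ((A ×ˢ (Finset.univ : Finset (Fin k))).image fun x => dist (p x.1) (q x.2)) :=
    Finset.mem_insert_self _ _
  set S := insert (1:ℝ)
      ((A ×ˢ (Finset.univ : Finset (Fin k))).image fun x => dist (p x.1) (q x.2)) with hSdef
  set r : ℝ := S.max' (Finset.insert_nonempty _ _) with hr
  have h1r : (1:ℝ) ≤ r := Finset.le_max' _ _ hS
  have hdistle : ∀ i ∈ A, ∀ j, dist (p i) (q j) ≤ r := by
    intro i hi j
    exact Finset.le_max' S _ (Finset.mem_insert_of_mem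
      (Finset.mem_image.2 ⟨(i, j), Finset.mem_product.2 ⟨hi, Finset.mem_univ _⟩, rfl⟩))
  have hr2 : r < 2 := by
    rw [hr, Finset.max'_lt_iff]
    intro b hb
    rcases Finset.mem_insert.1 hb with h | h
    · linarith
    · obtain ⟨⟨i, j⟩, hij, rfl⟩ := Finset.mem_image.1 h
      have hiA : i ∈ A := (Finset.mem_product.1 hij).1
      by_cases hjA : j ∈ A
      · simp only [hq, if_pos hjA, dist_zero_right, hpnorm]; linarith
      · have hij' : i ≠ j := fun h => hjA (h ▸ hiA)
        simp only [hq, if_neg hjA]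
        rw [dist_eq_norm, sub_neg_eq_add]
        exact norm_add_lt_two (hpnorm i) (hpnorm j) (fun h => hij' (hpinj h))
  have hrange_ne : (Set.range q).Nonempty := Set.range_nonempty q
  have hbdd : Bornology.IsBounded (Set.range q) := (Set.finite_range q).isBounded
  refine ⟨q, r, by linarith, fun i => ?_⟩
  have hedist : Metric.hausdorffEDist ({p i} : Set (EuclideanSpace ℝ (Fin 2)))
      (Set.range q) ≠ ⊤ :=
    Metric.hausdorffEdist_ne_top_of_nonempty_of_bounded (Set.singleton_nonempty _) hrange_ne
      Bornology.isBounded_singleton hbdd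
  constructor
  · intro hle
    by_contra hiA
    have h2 : dist (q i) (p i) ≤ Metric.hausdorffDist (Set.range q) ({p i} :
        Set (EuclideanSpace ℝ (Fin 2))) := by
      have := Metric.infDist_le_hausdorffDist_of_mem (Set.mem_range_self i)
        (by rwa [EMetric.hausdorffEdist_comm] at hedist)
      rwa [Metric.infDist_singleton] at this
    rw [Metric.hausdorffDist_comm] at h2
    have hqi : q i = -(p i) := if_neg hiA
    have : dist (q i) (p i) = 2 := by
      rw [hqi, dist_eq_norm, show -(p i) - p i = -(p i + p i) by abel, norm_neg,
        ← two_smul ℝ, norm_smul, hpnorm]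
      norm_num
    linarith
  · intro hiA
    refine Metric.hausdorffDist_le_of_mem_dist (by linarith) ?_ ?_
    · rintro x rfl
      exact ⟨q i, Set.mem_range_self i, by
        simp only [hq, if_pos hiA, dist_zero_right, hpnorm]; exact h1r⟩
    · rintro y ⟨j, rfl⟩
      exact ⟨p i, rfl, by rw [dist_comm]; exact hdistle i hiA j⟩
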